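/- Let f ≥ 3 be an integer and c an odd integer coprime to f. Then in ℚ[(ℤ/fℤ)ˣ] one has (1 − c·[σ_c]⁻¹) · S_f = Σ_{1≤a≤f, gcd(a,f)=1} (λ_a(c) + (1−c)/2)·[ā]⁻¹; in particular the element (1 − c·[σ_c]⁻¹)·S_f has all its coefficients in ℤ. -/

import Mathlib

open scoped BigOperators

/-- The Stickelberger element `S_f ∈ ℚ[(ℤ/fℤ)ˣ]`,
`S_f := −Σ_{1≤a≤f, gcd(a,f)=1} (a/f − 1/2)·[ā]⁻¹`. -/
noncomputable def stickelberger (f : ℕ) : MonoidAlgebra ℚ (ZMod f)ˣ :=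
  -(∑ a ∈ Finset.Icc 1 f,
      if h : Nat.Coprime a f then
        ((a : ℚ) / f - 1 / 2) • MonoidAlgebra.single ((ZMod.unitOfCoprime a h)⁻¹) (1 : ℚ)
      else 0)

/-- A total version of `ZMod.unitOfCoprime`. -/
noncomputable def stUnit (f a : ℕ) : (ZMod f)ˣ :=
  if h : Nat.Coprime a f then ZMod.unitOfCoprime a h else 1

lemma stUnit_eq (f a : ℕ) (h : Nat.Coprime a f) :
    stUnit f a = ZMod.unitOfCoprime a h := dif_pos h

lemma stUnit_coe (f a : ℕ) (h : Nat.Coprime a f) :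
    ((stUnit f a : (ZMod f)ˣ) : ZMod f) = (a : ZMod f) := by
  rw [stUnit_eq f a h, ZMod.coe_unitOfCoprime]

lemma st_sum_conv (f : ℕ) (q : ℕ → ℚ) :
    (∑ a ∈ Finset.Icc 1 f,
        if h : Nat.Coprime a f then
          q a • MonoidAlgebra.single ((ZMod.unitOfCoprime a h)⁻¹) (1 : ℚ)
        else 0)
      = ∑ a ∈ (Finset.Icc 1 f).filter (fun a => Nat.Coprime a f),
          q a • MonoidAlgebra.single ((stUnit f a)⁻¹) (1 : ℚ) := by
  rw [Finset.sum_filter]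
  refine Finset.sum_congr rfl fun a _ => ?_
  by_cases h : Nat.Coprime a f
  · rw [dif_pos h, if_pos h, stUnit_eq f a h]
  · rw [dif_neg h, if_neg h]

theorem statement6 (f : ℕ) (hf : 3 ≤ f) (c : ℕ) (hcodd : Odd c) (hc : Nat.Coprime c f)
    -- `a' a` is the unique integer in `[1,f]` with `a' a · c ≡ a (mod f)`
    (a' : ℕ → ℕ)
    (ha' : ∀ a, 1 ≤ a → a ≤ f → Nat.Coprime a f →
      1 ≤ a' a ∧ a' a ≤ f ∧ a' a * c ≡ a [MOD f])
    -- `lam a = λ_a(c) := (a' a · c − a)/f ∈ ℤ`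
    (lam : ℕ → ℤ)
    (hlam : ∀ a, 1 ≤ a → a ≤ f → Nat.Coprime a f →
      lam a * f = (a' a : ℤ) * c - a) :
    (1 - (c : ℚ) • MonoidAlgebra.single ((ZMod.unitOfCoprime c hc)⁻¹) (1 : ℚ))
        * stickelberger f
      = (∑ a ∈ Finset.Icc 1 f,
          if h : Nat.Coprime a f then
            ((lam a : ℚ) + (1 - (c : ℚ)) / 2) •
              MonoidAlgebra.single ((ZMod.unitOfCoprime a h)⁻¹) (1 : ℚ)
          else 0) ∧
    ∀ g : (ZMod f)ˣ, ∃ z : ℤ,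
      ((1 - (c : ℚ) • MonoidAlgebra.single ((ZMod.unitOfCoprime c hc)⁻¹) (1 : ℚ))
        * stickelberger f).coeff g = (z : ℚ) := by
  classical
  have hfpos : 0 < f := by omega
  have hfQ : (f : ℚ) ≠ 0 := by positivity
  set S : Finset ℕ := (Finset.Icc 1 f).filter (fun a => Nat.Coprime a f) with hS
  -- basic facts about members of S
  have hmemS : ∀ a ∈ S, 1 ≤ a ∧ a < f ∧ Nat.Coprime a f := by
    intro a ha
    rw [hS, Finset.mem_filter, Finset.mem_Icc] at ha
    refine ⟨ha.1.1, ?_, ha.2⟩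
    rcases lt_or_eq_of_le ha.1.2 with h | h
    · exact h
    · exfalso; subst h; have h2 := ha.2; rw [Nat.Coprime, Nat.gcd_self] at h2; omega
  -- the reindexing map
  set φ : ℕ → ℕ := fun b => b * c % f with hφ
  have hφcop : ∀ b ∈ S, Nat.Coprime (φ b) f := by
    intro b hb
    obtain ⟨_, _, hbc⟩ := hmemS b hb
    have h1 : Nat.Coprime (b * c) f := Nat.Coprime.mul hbc hc
    have hg : Nat.gcd f (b * c) = Nat.gcd (b * c % f) f := Nat.gcd_rec f (b * c)
    unfold Nat.Coprime at *
    rw [Nat.gcd_comm] at h1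
    show Nat.gcd (b * c % f) f = 1
    omega
  have hφmem : ∀ b ∈ S, φ b ∈ S := by
    intro b hb
    have hcop := hφcop b hb
    have hlt : φ b < f := Nat.mod_lt _ hfpos
    have hne : φ b ≠ 0 := by
      intro h0
      rw [h0] at hcop
      unfold Nat.Coprime at hcop
      simp at hcop
      omega
    rw [hS, Finset.mem_filter, Finset.mem_Icc]
    exact ⟨⟨by omega, by omega⟩, hcop⟩
  have ha'cop : ∀ a ∈ S, Nat.Coprime (a' a) f := by
    intro a ha
    obtain ⟨h1, h2, h3⟩ := hmemS a ha
    obtain ⟨_, _, hmod⟩ := ha' a h1 (le_of_lt h2) h3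
    have key : Nat.Coprime (a' a * c) f := by
      have h4 : a' a * c % f = a % f := hmod
      have h5 : Nat.gcd f (a' a * c) = Nat.gcd (a' a * c % f) f := Nat.gcd_rec f _
      have h6 : Nat.gcd f a = Nat.gcd (a % f) f := Nat.gcd_rec f a
      show Nat.gcd (a' a * c) f = 1
      rw [Nat.gcd_comm, h5, h4, ← h6, Nat.gcd_comm]
      exact h3
    exact Nat.Coprime.coprime_dvd_left (dvd_mul_right (a' a) c) key
  have ha'mem : ∀ a ∈ S, a' a ∈ S := by
    intro a ha
    obtain ⟨h1, h2, h3⟩ := hmemS a ha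
    obtain ⟨k1, k2, _⟩ := ha' a h1 (le_of_lt h2) h3
    rw [hS, Finset.mem_filter, Finset.mem_Icc]
    exact ⟨⟨k1, k2⟩, ha'cop a ha⟩
  have ha'lt : ∀ a ∈ S, a' a < f := fun a ha => (hmemS _ (ha'mem a ha)).2.1
  -- φ ∘ a' = id on S
  have hφa' : ∀ a ∈ S, φ (a' a) = a := by
    intro a ha
    obtain ⟨h1, h2, h3⟩ := hmemS a ha
    obtain ⟨_, _, hmod⟩ := ha' a h1 (le_of_lt h2) h3
    have hmm : a' a * c % f = a % f := hmod
    show a' a * c % f = a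
    rw [hmm, Nat.mod_eq_of_lt h2]
  -- a' ∘ φ = id on S
  have ha'φ : ∀ b ∈ S, a' (φ b) = b := by
    intro b hb
    obtain ⟨h1, h2, h3⟩ := hmemS b hb
    have hφS := hφmem b hb
    obtain ⟨k1, k2, k3⟩ := hmemS _ hφS
    obtain ⟨_, _, hmod⟩ := ha' (φ b) k1 (le_of_lt k2) k3
    have h4 : φ b ≡ b * c [MOD f] := Nat.mod_modEq _ _
    have h5 : a' (φ b) * c ≡ b * c [MOD f] := hmod.trans h4
    have h6 : a' (φ b) ≡ b [MOD f] :=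
      Nat.ModEq.cancel_right_of_coprime (by rw [Nat.gcd_comm]; exact hc) h5
    have h7 : a' (φ b) < f := ha'lt _ hφS
    have h8 : a' (φ b) % f = b % f := h6
    rw [Nat.mod_eq_of_lt h7, Nat.mod_eq_of_lt h2] at h8
    exact h8
  -- rewrite stickelberger
  have hst : stickelberger f
      = -(∑ a ∈ S, ((a : ℚ) / f - 1 / 2) • MonoidAlgebra.single ((stUnit f a)⁻¹) (1 : ℚ)) := by
    rw [stickelberger, st_sum_conv f (fun a => (a : ℚ) / f - 1 / 2)]
  -- the key multiplication fact
  have hmul : ∀ b ∈ S,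
      MonoidAlgebra.single ((ZMod.unitOfCoprime c hc)⁻¹) (1 : ℚ)
        * MonoidAlgebra.single ((stUnit f b)⁻¹) (1 : ℚ)
      = MonoidAlgebra.single ((stUnit f (φ b))⁻¹) (1 : ℚ) := by
    intro b hb
    obtain ⟨_, _, hbc⟩ := hmemS b hb
    rw [MonoidAlgebra.single_mul_single, one_mul]
    congr 1
    rw [← mul_inv_rev]
    congr 1
    apply Units.ext
    push_cast
    rw [stUnit_coe f b hbc, stUnit_coe f (φ b) (hφcop b hb), ZMod.coe_unitOfCoprime]
    show ((b : ZMod f)) * (c : ZMod f) = ((b * c % f : ℕ) : ZMod f)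
    rw [ZMod.natCast_mod]
    push_cast
    ring
  -- compute (c • single) * stickelberger
  have hXS : ((c : ℚ) • MonoidAlgebra.single ((ZMod.unitOfCoprime c hc)⁻¹) (1 : ℚ))
        * stickelberger f
      = -(∑ a ∈ S, ((c : ℚ) * ((a' a : ℚ) / f - 1 / 2)) •
          MonoidAlgebra.single ((stUnit f a)⁻¹) (1 : ℚ)) := by
    rw [hst, smul_mul_assoc, mul_neg, smul_neg, Finset.mul_sum, Finset.smul_sum]
    congr 1
    refine Finset.sum_nbij' φ a' hφmem ha'mem ha'φ hφa' ?_
    intro b hb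
    rw [mul_smul_comm, hmul b hb, smul_smul, ha'φ b hb]
  -- the main identity
  have main : (1 - (c : ℚ) • MonoidAlgebra.single ((ZMod.unitOfCoprime c hc)⁻¹) (1 : ℚ))
        * stickelberger f
      = ∑ a ∈ Finset.Icc 1 f,
          if h : Nat.Coprime a f then
            ((lam a : ℚ) + (1 - (c : ℚ)) / 2) •
              MonoidAlgebra.single ((ZMod.unitOfCoprime a h)⁻¹) (1 : ℚ)
          else 0 := by
    rw [sub_mul, one_mul, hXS, hst,
      st_sum_conv f (fun a => (lam a : ℚ) + (1 - (c : ℚ)) / 2), neg_sub_neg,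
      ← Finset.sum_sub_distrib]
    refine Finset.sum_congr rfl fun a ha => ?_
    rw [← sub_smul]
    congr 1
    obtain ⟨h1, h2, h3⟩ := hmemS a ha
    have hq : (lam a : ℚ) * f = (a' a : ℚ) * c - a := by
      exact_mod_cast hlam a h1 (le_of_lt h2) h3
    field_simp
    ring_nf
    ring_nf at hq
    linarith
  refine ⟨main, fun g => ?_⟩
  obtain ⟨k, hk⟩ := hcodd
  refine ⟨∑ a ∈ S, (if (stUnit f a)⁻¹ = g then lam a - k else 0), ?_⟩
  rw [main, st_sum_conv f (fun a => (lam a : ℚ) + (1 - (c : ℚ)) / 2),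
    MonoidAlgebra.coeff_sum, Finsupp.finset_sum_apply]
  push_cast
  refine Finset.sum_congr rfl fun a ha => ?_
  rw [MonoidAlgebra.coeff_smul_apply, MonoidAlgebra.coeff_single_apply]
  by_cases hg : (stUnit f a)⁻¹ = g
  · rw [if_pos hg, if_pos hg, smul_eq_mul, mul_one]
    have : (c : ℚ) = 2 * k + 1 := by exact_mod_cast congrArg (Nat.cast : ℕ → ℚ) hk
    rw [this]
    ring
  · rw [if_neg hg, if_neg hg, smul_zero]
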